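/- Let F be a polybox contained in a d-box X = X_1 × ... × X_d (finite factors, sizes ≥ 2). If F admits a proper suit (partition into pairwise dichotomous proper boxes) of size 2^d, then F = X. -/
import Mathlib


/-- if a polybox `F` in a `d`-box `X` admits a proper suit of size `2^d`,
then `F = X`. -/
theorem stmt_6 {d : ℕ} (X : Fin d → Type*) [∀ i, Fintype (X i)] [∀ i, DecidableEq (X i)]
    (hX : ∀ i, 2 ≤ Fintype.card (X i))
    (F : Set (∀ i, X i))
    (𝓕 : Finset (∀ i, Finset (X i)))
    (h𝓕p : ∀ A ∈ 𝓕, ∀ i, (A i).Nonempty ∧ A i ≠ Finset.univ)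
    (h𝓕d : ∀ A ∈ 𝓕, ∀ B ∈ 𝓕, A ≠ B → ∃ i, A i = (B i)ᶜ)
    (h𝓕u : F = {x | ∃ A ∈ 𝓕, ∀ i, x i ∈ A i})
    (hcard : 𝓕.card = 2 ^ d) :
    F = Set.univ := by
  ext x
  simp only [Set.mem_univ, iff_true, h𝓕u, Set.mem_setOf_eq]
  -- map each box to the boolean vector of memberships of x
  let φ : {A // A ∈ 𝓕} → (Fin d → Bool) := fun A i => decide (x i ∈ A.1 i)
  have hinj : Function.Injective φ := by
    intro A B hAB
    by_contra hne
    have hne' : A.1 ≠ B.1 := fun h => hne (Subtype.ext h)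
    obtain ⟨i, hi⟩ := h𝓕d A.1 A.2 B.1 B.2 hne'
    have := congrFun hAB i
    simp only [φ, hi, Finset.mem_compl, decide_eq_decide] at this
    tauto
  have hcard' : Fintype.card {A // A ∈ 𝓕} = Fintype.card (Fin d → Bool) := by
    simp [Fintype.card_coe, hcard]
  have hsurj : Function.Surjective φ :=
    ((Fintype.bijective_iff_injective_and_card φ).2 ⟨hinj, hcard'⟩).2
  obtain ⟨A, hA⟩ := hsurj (fun _ => true)
  refine ⟨A.1, A.2, fun i => ?_⟩
  have := congrFun hA i
  simpa [φ] using this
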